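/- Suppose p = 2 (so q is a power of 2). Let b be an integer with 0 < b < q/3 and b ≡ 3 (mod 4). Then for every integer d ≥ 0, S_d(q+b)^3 = S_d(3q+3b) in K. -/

import Mathlib

/-!
Setting: `F` is the finite field `𝔽_q` with `q = Fintype.card F` elements.
`A = 𝔽_q[t]` is the polynomial ring, and `K∞ = 𝔽_q((1/t))` is the completion of
`K = 𝔽_q(t)` at the infinite place.  We realize `K∞` as the Laurent series field
`LaurentSeries F = F((X))` with `t := X⁻¹`, so that `X = 1/t` is a uniformizer at `∞`.
Monic polynomials in `t` of degree `d` are parametrized by their lower-order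
coefficients `c : Fin d → F`.
-/

open Polynomial

noncomputable section

/-- `t := X⁻¹ ∈ F((X))`, so that `F((X)) = 𝔽_q((1/t)) = K∞`. -/
def tt (F : Type*) [Field F] : LaurentSeries F := HahnSeries.single (-1 : ℤ) 1

/-- The monic polynomial in `t` of degree `d` with coefficient `c i` in degree `i < d`,
evaluated at `t`, as an element of `K∞`.  As `c` ranges over `Fin d → F`, these are
exactly the monic polynomials of degree `d` in `t`. -/
def monicVal (F : Type*) [Field F] (d : ℕ) (c : Fin d → F) : LaurentSeries F :=
  Polynomial.aeval (tt F) (X ^ d + ∑ i : Fin d, C (c i) * X ^ (i : ℕ))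

/-- The power sum `S_d(s) = ∑_{a ∈ A₊, deg a = d} 1/aˢ ∈ K ⊆ K∞`. -/
def S (F : Type*) [Field F] [Fintype F] (d s : ℕ) : LaurentSeries F :=
  ∑ c : Fin d → F, (monicVal F d c ^ s)⁻¹

/-- The Carlitz zeta value `ζ(s) = ∑_{d ≥ 0} S_d(s) ∈ K∞`. -/
def zeta (F : Type*) [Field F] [Fintype F] (s : ℕ) : LaurentSeries F :=
  ∑' d : ℕ, S F d s

/-- The multizeta value `ζ(s₁, …, s_r) = ∑_{d₁ > d₂ > ⋯ > d_r ≥ 0} S_{d₁}(s₁)⋯S_{d_r}(s_r)`. -/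
def multizeta (F : Type*) [Field F] [Fintype F] {r : ℕ} (s : Fin r → ℕ) : LaurentSeries F :=
  ∑' d : {d : Fin r → ℕ // ∀ i j : Fin r, i < j → d j < d i},
    ∏ i : Fin r, S F (d.1 i) (s i)

/-- The (possibly degenerate) multizeta value `ζ_ρ(s)` attached to a linear preorder `ρ`
on `{1, …, r}`: the sum of `S_{d₁}(s₁)⋯S_{d_r}(s_r)` over all tuples `d` such that
`d i ≤ d j ↔ i ρ j` for all `i, j`. -/
def zetaRho (F : Type*) [Field F] [Fintype F] {r : ℕ} (ρ : Fin r → Fin r → Prop)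
    (s : Fin r → ℕ) : LaurentSeries F :=
  ∑' d : {d : Fin r → ℕ // ∀ i j : Fin r, d i ≤ d j ↔ ρ i j},
    ∏ i : Fin r, S F (d.1 i) (s i)


section Aux


lemma even_choose_of_parity {n k : ℕ} (hn : n % 2 = 0) (hk : k % 2 = 1) :
    2 ∣ Nat.choose n k := by
  have h := Choose.choose_modEq_choose_mod_mul_choose_div_nat (p := 2) (n := n) (k := k)
  rw [hn, hk] at h
  simpa using (Nat.modEq_zero_iff_dvd).mp (h.trans (by simp [Nat.ModEq]))

lemma even_choose_of_div2 {n k : ℕ} (hn : (n / 2) % 2 = 0) (hk : (k / 2) % 2 = 1) :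
    2 ∣ Nat.choose n k := by
  have h := Choose.choose_modEq_choose_mod_mul_choose_div_nat (p := 2) (n := n) (k := k)
  have h2 : 2 ∣ Nat.choose (n % 2) (k % 2) * Nat.choose (n / 2) (k / 2) :=
    Dvd.dvd.mul_left (even_choose_of_parity hn hk) _
  exact (Nat.modEq_zero_iff_dvd).mp (h.trans ((Nat.modEq_zero_iff_dvd).mpr h2))


open Finset

lemma choose_pascal_aux (M N : ℕ) (hM : 1 ≤ M) :
    (M + N).choose N = (M + N - 1).choose M + (M - 1 + N).choose N := by
  obtain ⟨m, rfl⟩ : ∃ m, M = m + 1 := ⟨M - 1, by omega⟩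
  cases N with
  | zero => simp
  | succ j =>
      rw [show m + 1 + (j + 1) = (m + j + 1) + 1 by omega]
      rw [Nat.add_sub_cancel, show m + 1 - 1 + (j + 1) = m + j + 1 by omega,
        Nat.choose_succ_succ, show m + j + 1 = m + 1 + j by omega, Nat.choose_symm_add]

lemma J_aux {R : Type*} [CommRing R] (u v : R) (huv : u + v = 1) (M : ℕ) (hM : 1 ≤ M)
    (N : ℕ) :
    (∑ k ∈ range N, (Nat.choose (M + k) k : R) * v ^ k) * u
      + (Nat.choose (M + N - 1) M : R) * v ^ N
      = ∑ k ∈ range N, (Nat.choose (M - 1 + k) k : R) * v ^ k := by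
  induction N with
  | zero =>
      simp [Nat.choose_eq_zero_of_lt (show M - 1 < M by omega)]
  | succ N ih =>
      rw [sum_range_succ, sum_range_succ,
        show M + (N + 1) - 1 = M + N by omega]
      have hA : (Nat.choose (M + N) M : R) = (Nat.choose (M + N) N : R) := by
        exact_mod_cast congrArg (Nat.cast : ℕ → R) (Nat.choose_symm_add (a := M) (b := N))
      have hB : (Nat.choose (M + N) N : R)
          = (Nat.choose (M + N - 1) M : R) + (Nat.choose (M - 1 + N) N : R) := by
        exact_mod_cast congrArg (Nat.cast : ℕ → R) (choose_pascal_aux M N hM)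
      linear_combination ih + (Nat.choose (M + N) N : R) * v ^ N * huv + v ^ N * hB
        + v ^ (N + 1) * hA

lemma J_identity {R : Type*} [CommRing R] (u v : R) (huv : u + v = 1) :
    ∀ M, 1 ≤ M → ∀ N, 1 ≤ N →
    (∑ k ∈ range M, (Nat.choose (N - 1 + k) k : R) * (u ^ k * v ^ N))
      + ∑ k ∈ range N, (Nat.choose (M - 1 + k) k : R) * (v ^ k * u ^ M) = 1 := by
  intro M hM
  induction M with
  | zero => omega
  | succ M ih =>
      intro N hN
      have e3 : ∑ k ∈ range N, (Nat.choose (M + 1 - 1 + k) k : R) * (v ^ k * u ^ (M + 1))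
          = (∑ k ∈ range N, (Nat.choose (M + k) k : R) * v ^ k) * u ^ (M + 1) := by
        rw [sum_mul]; exact sum_congr rfl fun k _ => by rw [Nat.add_sub_cancel]; ring
      rw [e3]
      rcases Nat.eq_zero_or_pos M with rfl | hM1
      · simp only [range_one, sum_singleton, pow_zero, one_mul, pow_one, zero_add,
          Nat.choose_zero_right, Nat.choose_self, Nat.cast_one]
        have hg := geom_sum_mul v N
        linear_combination (-1 : R) * hg + (∑ k ∈ range N, v ^ k) * huv
      · have ihN := ih hM1 N hN
        have haux := J_aux u v huv M hM1 N
        have e2 : ∑ k ∈ range N, (Nat.choose (M - 1 + k) k : R) * (v ^ k * u ^ M)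
            = (∑ k ∈ range N, (Nat.choose (M - 1 + k) k : R) * v ^ k) * u ^ M := by
          rw [sum_mul]; exact sum_congr rfl fun k _ => by ring
        rw [e2] at ihN
        rw [sum_range_succ, show N - 1 + M = M + N - 1 by omega]
        linear_combination ihN + u ^ M * haux

open Finset


lemma pow_mul_pow_inv {K : Type*} [Field K] (x : K) (hx : x ≠ 0) {m k : ℕ} (hkm : k ≤ m) :
    x ^ k * (x ^ m)⁻¹ = (x ^ (m - k))⁻¹ := by
  rw [pow_sub₀ x hx hkm]; field_simp

lemma pair_partial_fraction {K : Type*} [Field K] [CharP K 2] (a f : K) (ha : a ≠ 0)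
    (hf : f ≠ 0) (haf : a + f ≠ 0) (M N : ℕ) (hM : 1 ≤ M) (hN : 1 ≤ N) :
    (a ^ M)⁻¹ * ((a + f) ^ N)⁻¹
      = (∑ k ∈ range M, (Nat.choose (N - 1 + k) k : K) * ((f ^ (N + k))⁻¹ * (a ^ (M - k))⁻¹))
        + ∑ k ∈ range N, (Nat.choose (M - 1 + k) k : K) *
            ((f ^ (M + k))⁻¹ * ((a + f) ^ (N - k))⁻¹) := by
  have huv : a * f⁻¹ + (a + f) * f⁻¹ = 1 := by
    have h2 : a + a = 0 := by
      have := CharTwo.add_self_eq_zero (R := K) a; exact this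
    field_simp
    linear_combination h2
  have hJ := J_identity (a * f⁻¹) ((a + f) * f⁻¹) huv M hM N hN
  have expand : (a ^ M)⁻¹ * ((a + f) ^ N)⁻¹
      = ((∑ k ∈ range M, (Nat.choose (N - 1 + k) k : K) * ((a * f⁻¹) ^ k * ((a + f) * f⁻¹) ^ N))
        + ∑ k ∈ range N, (Nat.choose (M - 1 + k) k : K) *
            (((a + f) * f⁻¹) ^ k * (a * f⁻¹) ^ M)) * ((a ^ M)⁻¹ * ((a + f) ^ N)⁻¹) := by
    rw [hJ, one_mul]
  rw [expand, add_mul, sum_mul, sum_mul]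
  congr 1
  · refine sum_congr rfl fun k hk => ?_
    have hkM : k ≤ M := le_of_lt (mem_range.mp hk)
    have step : ((a * f⁻¹) ^ k * ((a + f) * f⁻¹) ^ N) * ((a ^ M)⁻¹ * ((a + f) ^ N)⁻¹)
        = (f ^ (N + k))⁻¹ * (a ^ (M - k))⁻¹ := by
      calc ((a * f⁻¹) ^ k * ((a + f) * f⁻¹) ^ N) * ((a ^ M)⁻¹ * ((a + f) ^ N)⁻¹)
          = (a ^ k * (a ^ M)⁻¹) * ((a + f) ^ N * ((a + f) ^ N)⁻¹) * (f⁻¹ ^ k * f⁻¹ ^ N) := by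
            simp only [mul_pow]; ring
        _ = (a ^ (M - k))⁻¹ * 1 * f⁻¹ ^ (N + k) := by
            rw [pow_mul_pow_inv a ha hkM, mul_inv_cancel₀ (pow_ne_zero _ haf), ← pow_add,
              add_comm k N]
        _ = (f ^ (N + k))⁻¹ * (a ^ (M - k))⁻¹ := by rw [inv_pow]; ring
    rw [mul_assoc, step]
  · refine sum_congr rfl fun k hk => ?_
    have hkN : k ≤ N := le_of_lt (mem_range.mp hk)
    have step : (((a + f) * f⁻¹) ^ k * (a * f⁻¹) ^ M) * ((a ^ M)⁻¹ * ((a + f) ^ N)⁻¹)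
        = (f ^ (M + k))⁻¹ * ((a + f) ^ (N - k))⁻¹ := by
      calc (((a + f) * f⁻¹) ^ k * (a * f⁻¹) ^ M) * ((a ^ M)⁻¹ * ((a + f) ^ N)⁻¹)
          = ((a + f) ^ k * ((a + f) ^ N)⁻¹) * (a ^ M * (a ^ M)⁻¹) * (f⁻¹ ^ k * f⁻¹ ^ M) := by
            simp only [mul_pow]; ring
        _ = ((a + f) ^ (N - k))⁻¹ * 1 * f⁻¹ ^ (M + k) := by
            rw [pow_mul_pow_inv (a + f) haf hkN, mul_inv_cancel₀ (pow_ne_zero _ ha), ← pow_add,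
              add_comm k M]
        _ = (f ^ (M + k))⁻¹ * ((a + f) ^ (N - k))⁻¹ := by rw [inv_pow]; ring
    rw [mul_assoc, step]

/-- value of the low-order part -/
def lowVal (F : Type*) [Field F] (d : ℕ) (e : Fin d → F) : LaurentSeries F :=
  Polynomial.aeval (tt F) (∑ i : Fin d, C (e i) * X ^ (i : ℕ))

variable {F : Type*} [Field F]

lemma tt_pow (n : ℕ) : (tt F) ^ n = HahnSeries.single (-(n : ℤ)) 1 := by
  rw [tt, HahnSeries.single_pow]
  simp

lemma aeval_C_mul_X_pow (a : F) (n : ℕ) :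
    Polynomial.aeval (tt F) (C a * X ^ n) = HahnSeries.single (-(n : ℤ)) a := by
  rw [map_mul, map_pow, aeval_X, aeval_C, tt_pow]
  have hC : (algebraMap F (LaurentSeries F)) a = HahnSeries.C a := by
    rw [HahnSeries.algebraMap_apply', PowerSeries.algebraMap_apply]
    simp [HahnSeries.ofPowerSeries_C]
  rw [hC, HahnSeries.C_apply, HahnSeries.single_mul_single]
  simp

lemma lowVal_eq_sum (d : ℕ) (e : Fin d → F) :
    lowVal F d e = ∑ i : Fin d, HahnSeries.single (-(i : ℤ)) (e i) := by
  rw [lowVal, map_sum]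
  exact Finset.sum_congr rfl fun i _ => aeval_C_mul_X_pow (e i) i

lemma lowVal_coeff (d : ℕ) (e : Fin d → F) (j : Fin d) :
    (lowVal F d e).coeff (-(j : ℤ)) = e j := by
  rw [lowVal_eq_sum]
  have h := map_sum (HahnSeries.coeff.addMonoidHom (-(j : ℤ)))
    (fun i : Fin d => HahnSeries.single (-(i : ℤ)) (e i)) Finset.univ
  simp only [HahnSeries.coeff.addMonoidHom_apply] at h
  rw [h, Finset.sum_eq_single j]
  · rw [HahnSeries.coeff_single_same]
  · intro i _ hij
    apply HahnSeries.coeff_single_of_ne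
    simp only [ne_eq, neg_inj, Nat.cast_inj]
    exact fun h => hij (Fin.ext (by omega))
  · intro h; exact absurd (Finset.mem_univ j) h

lemma lowVal_coeff_d (d : ℕ) (e : Fin d → F) :
    (lowVal F d e).coeff (-(d : ℤ)) = 0 := by
  rw [lowVal_eq_sum]
  have h := map_sum (HahnSeries.coeff.addMonoidHom (-(d : ℤ)))
    (fun i : Fin d => HahnSeries.single (-(i : ℤ)) (e i)) Finset.univ
  simp only [HahnSeries.coeff.addMonoidHom_apply] at h
  rw [h]
  apply Finset.sum_eq_zero
  intro i _
  apply HahnSeries.coeff_single_of_ne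
  have : (i : ℤ) < (d : ℤ) := by exact_mod_cast i.2
  omega

lemma lowVal_ne_zero {d : ℕ} {e : Fin d → F} (he : e ≠ 0) : lowVal F d e ≠ 0 := by
  obtain ⟨j, hj⟩ : ∃ j, e j ≠ 0 := by
    by_contra h; push_neg at h; exact he (funext h)
  intro h
  apply hj
  rw [← lowVal_coeff d e j, h, HahnSeries.coeff_zero]

lemma monicVal_eq (d : ℕ) (c : Fin d → F) :
    monicVal F d c = HahnSeries.single (-(d : ℤ)) 1 + lowVal F d c := by
  rw [monicVal, map_add, lowVal, map_pow, aeval_X, tt_pow]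

lemma monicVal_ne_zero (d : ℕ) (c : Fin d → F) : monicVal F d c ≠ 0 := by
  intro h
  have : (monicVal F d c).coeff (-(d : ℤ)) = 1 := by
    rw [monicVal_eq, HahnSeries.coeff_add, HahnSeries.coeff_single_same, lowVal_coeff_d, add_zero]
  rw [h, HahnSeries.coeff_zero] at this
  exact one_ne_zero this.symm

lemma monicVal_add_lowVal (d : ℕ) (c e : Fin d → F) :
    monicVal F d c + lowVal F d e = monicVal F d (c + e) := by
  rw [monicVal_eq, monicVal_eq, lowVal_eq_sum, lowVal_eq_sum, lowVal_eq_sum, add_assoc,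
    ← Finset.sum_add_distrib]
  congr 1
  apply Finset.sum_congr rfl
  intro i _
  have h : HahnSeries.single (-(i : ℤ)) (c i) + HahnSeries.single (-(i : ℤ)) (e i)
      = HahnSeries.single (-(i : ℤ)) (c i + e i) := by
    ext b
    by_cases hb : b = -(i : ℤ) <;>
      simp [hb, HahnSeries.coeff_add, HahnSeries.coeff_single_same,
        HahnSeries.coeff_single_of_ne]
  rw [h]
  rfl

lemma lowVal_smul (d : ℕ) (a : F) (e : Fin d → F) :
    lowVal F d (a • e) = HahnSeries.C a * lowVal F d e := by
  rw [lowVal_eq_sum, lowVal_eq_sum, Finset.mul_sum]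
  apply Finset.sum_congr rfl
  intro i _
  rw [HahnSeries.C_apply, HahnSeries.single_mul_single, zero_add]
  rfl

lemma chi_one (q b k : ℕ) (h16 : 16 ∣ q) (h3 : ¬ 3 ∣ q) (hb4 : b % 4 = 3) (hb' : 3 * b < q)
    (hk : k < 2 * (q + b)) (hdvd : (q - 1) ∣ (q + b + k)) :
    2 ∣ Nat.choose (q + b - 1 + k) k := by
  obtain ⟨m, hm⟩ := hdvd
  have hq : 3 * b + 4 ≤ q := by omega
  have hm2 : 2 ≤ m := by
    by_contra h
    push_neg at h
    have : (q - 1) * m ≤ (q - 1) * 1 := Nat.mul_le_mul_left _ (by omega)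
    omega
  have hm3 : m ≤ 3 := by
    by_contra h
    push_neg at h
    have : (q - 1) * 4 ≤ (q - 1) * m := Nat.mul_le_mul_left _ (by omega)
    omega
  interval_cases m
  · exact even_choose_of_div2 (by omega) (by omega)
  · exact even_choose_of_div2 (by omega) (by omega)

lemma chi_two (q b k : ℕ) (h16 : 16 ∣ q) (h3 : ¬ 3 ∣ q) (hb4 : b % 4 = 3) (hb' : 3 * b < q)
    (hk : k < q + b) (hdvd : (q - 1) ∣ (2 * (q + b) + k)) :
    2 ∣ Nat.choose (2 * (q + b) - 1 + k) k := by
  obtain ⟨m, hm⟩ := hdvd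
  have hq : 3 * b + 4 ≤ q := by omega
  have hm2 : 3 ≤ m := by
    by_contra h
    push_neg at h
    have : (q - 1) * m ≤ (q - 1) * 2 := Nat.mul_le_mul_left _ (by omega)
    omega
  have hm3 : m ≤ 3 := by
    by_contra h
    push_neg at h
    have : (q - 1) * 4 ≤ (q - 1) * m := Nat.mul_le_mul_left _ (by omega)
    omega
  have hm' : m = 3 := by omega
  subst hm'
  exact even_choose_of_parity (by omega) (by omega)

lemma sum_inv_pow_lowVal_eq_zero (F : Type*) [Field F] [Fintype F] {d : ℕ}
    [DecidableEq (Fin d → F)] (m : ℕ) (hm1 : 1 ≤ m) (hm : ¬ (Fintype.card F - 1) ∣ m) :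
    ∑ e ∈ Finset.univ.erase (0 : Fin d → F), ((lowVal F d e) ^ m)⁻¹ = 0 := by
  classical
  obtain ⟨ζ, hζ⟩ := IsCyclic.exists_generator (α := Fˣ)
  have hord : orderOf ζ = Fintype.card F - 1 := by
    rw [orderOf_eq_card_of_forall_mem_zpowers hζ, Nat.card_eq_fintype_card, Fintype.card_units]
  have hu : (ζ : F) ≠ 0 := Units.ne_zero ζ
  have hζm : (ζ : F) ^ m ≠ 1 := by
    intro h
    apply hm
    rw [← hord]
    apply orderOf_dvd_of_pow_eq_one
    apply Units.ext
    rw [Units.val_pow_eq_pow_val]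
    simpa using h
  set u : F := (ζ : F) with hudef
  set T := ∑ e ∈ Finset.univ.erase (0 : Fin d → F), ((lowVal F d e) ^ m)⁻¹ with hT
  have hre : T = ∑ e ∈ Finset.univ.erase (0 : Fin d → F), ((lowVal F d (u • e)) ^ m)⁻¹ := by
    rw [hT]
    apply Finset.sum_nbij' (i := fun e => u⁻¹ • e) (j := fun e => u • e)
    · intro a ha
      simp only [Finset.mem_erase, Finset.mem_univ, and_true, ne_eq] at *
      simp [smul_eq_zero, inv_eq_zero, hu, ha]
    · intro a ha
      simp only [Finset.mem_erase, Finset.mem_univ, and_true, ne_eq] at *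
      simp [smul_eq_zero, hu, ha]
    · intro a _
      rw [smul_smul, mul_inv_cancel₀ hu, one_smul]
    · intro a _
      rw [smul_smul, inv_mul_cancel₀ hu, one_smul]
    · intro a _
      rw [smul_smul, mul_inv_cancel₀ hu, one_smul]
  have hfac : ∀ e : Fin d → F, ((lowVal F d (u • e)) ^ m)⁻¹
      = ((HahnSeries.C u ^ m : LaurentSeries F))⁻¹ * ((lowVal F d e) ^ m)⁻¹ := by
    intro e
    rw [lowVal_smul, mul_pow, mul_inv]
  rw [Finset.sum_congr rfl (fun e _ => hfac e), ← Finset.mul_sum, ← hT] at hre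
  have hγ : ((HahnSeries.C u ^ m : LaurentSeries F))⁻¹ ≠ 1 := by
    intro h
    rw [inv_eq_one, ← map_pow] at h
    exact hζm (HahnSeries.C_injective (h.trans HahnSeries.C_one.symm))
  have hz : (1 - ((HahnSeries.C u ^ m : LaurentSeries F))⁻¹) * T = 0 := by
    rw [sub_mul, one_mul]
    rw [← hre]
    exact sub_self T
  rcases mul_eq_zero.mp hz with h | h
  · exact absurd (by rw [sub_eq_zero] at h; exact h.symm) hγ
  · exact h

end Aux

set_option maxHeartbeats 2000000 in
/-- Suppose `p = 2` (so `q` is a power of 2).  If `0 < b < q/3` and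
`b ≡ 3 (mod 4)`, then `S_d(q + b)³ = S_d(3q + 3b)` for every `d ≥ 0`. -/
theorem S_cube_of_three_mod_four (F : Type*) [Field F] [Fintype F] [CharP F 2]
    (b : ℕ) (hb : 0 < b) (hb' : 3 * b < Fintype.card F) (hb4 : b % 4 = 3) (d : ℕ) :
    S F d (Fintype.card F + b) ^ 3 = S F d (3 * Fintype.card F + 3 * b) := by
  classical
  haveI hch : CharP (LaurentSeries F) 2 :=
    charP_of_injective_ringHom (HahnSeries.C_injective (R := F) (Γ := ℤ)) 2
  obtain ⟨n, hp2, hcard⟩ := FiniteField.card F 2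
  have hb3 : 3 ≤ b := by omega
  have hq9 : 9 < Fintype.card F := by omega
  have h16 : 16 ∣ Fintype.card F := by
    have h4 : 4 ≤ (n : ℕ) := by
      by_contra h
      push_neg at h
      have : Fintype.card F ≤ 2 ^ 3 := by
        rw [hcard]
        exact Nat.pow_le_pow_right (by norm_num) (by omega)
      omega
    calc (16 : ℕ) = 2 ^ 4 := by norm_num
    _ ∣ 2 ^ (n : ℕ) := pow_dvd_pow 2 h4
    _ = Fintype.card F := hcard.symm
  have h3q : ¬ (3 ∣ Fintype.card F) := by
    intro hdvd
    rw [hcard] at hdvd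
    have := Nat.Prime.dvd_of_dvd_pow Nat.prime_three hdvd
    omega
  set s : ℕ := Fintype.card F + b with hsdef
  have hs1 : 1 ≤ s := by omega
  have h2s1 : 1 ≤ 2 * s := by omega
  rw [show 3 * Fintype.card F + 3 * b = 3 * s by omega]
  simp only [S]
  -- char-2 helpers for the index group
  have hself : ∀ x : Fin d → F, x + x = 0 := fun x =>
    funext fun i => CharTwo.add_self_eq_zero (x i)
  have hinv : ∀ x y : Fin d → F, x + (x + y) = y := fun x y => by
    rw [← add_assoc, hself, zero_add]
  -- power computations
  have hx2 : ∀ c : Fin d → F,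
      (((monicVal F d c) ^ s)⁻¹) ^ 2 = ((monicVal F d c) ^ (2 * s))⁻¹ := by
    intro c
    rw [inv_pow, ← pow_mul, Nat.mul_comm s 2]
  have hx3 : ∀ c : Fin d → F,
      (((monicVal F d c) ^ s)⁻¹) ^ 2 * ((monicVal F d c) ^ s)⁻¹
        = ((monicVal F d c) ^ (3 * s))⁻¹ := by
    intro c
    rw [inv_pow, ← pow_mul, ← mul_inv, ← pow_add, show s * 2 + s = 3 * s by omega]
  -- expand the cube
  have cube : (∑ c : Fin d → F, ((monicVal F d c) ^ s)⁻¹) ^ 3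
      = (∑ c : Fin d → F, ((monicVal F d c) ^ (3 * s))⁻¹)
        + ∑ c : Fin d → F, ∑ c' ∈ Finset.univ.erase c,
            ((monicVal F d c) ^ (2 * s))⁻¹ * ((monicVal F d c') ^ s)⁻¹ := by
    have h3 : (∑ c : Fin d → F, ((monicVal F d c) ^ s)⁻¹) ^ 3
        = (∑ c : Fin d → F, ((monicVal F d c) ^ s)⁻¹) ^ 2
          * ∑ c : Fin d → F, ((monicVal F d c) ^ s)⁻¹ := by ring
    rw [h3, CharTwo.sum_sq, Finset.sum_mul_sum, ← Finset.sum_add_distrib]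
    apply Finset.sum_congr rfl
    intro c _
    rw [← Finset.add_sum_erase _ _ (Finset.mem_univ c), hx3 c]
    have e : (∑ c' ∈ Finset.univ.erase c, (((monicVal F d c) ^ s)⁻¹) ^ 2
          * ((monicVal F d c') ^ s)⁻¹)
        = ∑ c' ∈ Finset.univ.erase c,
            ((monicVal F d c) ^ (2 * s))⁻¹ * ((monicVal F d c') ^ s)⁻¹ :=
      Finset.sum_congr rfl fun c' _ => by rw [hx2 c]
    rw [e]
  rw [cube]
  -- the cross term vanishes
  have reindex1 : ∀ c : Fin d → F,
      ∑ c' ∈ Finset.univ.erase c,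
          ((monicVal F d c) ^ (2 * s))⁻¹ * ((monicVal F d c') ^ s)⁻¹
        = ∑ e ∈ Finset.univ.erase (0 : Fin d → F),
            ((monicVal F d c) ^ (2 * s))⁻¹ * ((monicVal F d (c + e)) ^ s)⁻¹ := by
    intro c
    apply Finset.sum_nbij' (i := fun c' => c + c') (j := fun e => c + e)
    · intro a ha
      rw [Finset.mem_erase] at *
      refine ⟨fun h0 => ha.1 ?_, Finset.mem_univ _⟩
      have := congrArg (fun z => c + z) h0
      simpa [hinv] using this
    · intro a ha
      rw [Finset.mem_erase] at *
      refine ⟨fun h0 => ha.1 ?_, Finset.mem_univ _⟩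
      have := congrArg (fun z => c + z) h0
      simpa [hinv, hself] using this
    · intro a _; exact hinv c a
    · intro a _; exact hinv c a
    · intro a _
      rw [hinv]
  have mainrw : ∀ c : Fin d → F, ∀ e ∈ Finset.univ.erase (0 : Fin d → F),
      ((monicVal F d c) ^ (2 * s))⁻¹ * ((monicVal F d (c + e)) ^ s)⁻¹
        = (∑ k ∈ Finset.range (2 * s), (Nat.choose (s - 1 + k) k : LaurentSeries F)
              * (((lowVal F d e) ^ (s + k))⁻¹ * ((monicVal F d c) ^ (2 * s - k))⁻¹))
          + ∑ k ∈ Finset.range s, (Nat.choose (2 * s - 1 + k) k : LaurentSeries F)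
              * (((lowVal F d e) ^ (2 * s + k))⁻¹ * ((monicVal F d (c + e)) ^ (s - k))⁻¹) := by
    intro c e he
    have he0 : e ≠ 0 := (Finset.mem_erase.mp he).1
    have h := pair_partial_fraction (monicVal F d c) (lowVal F d e) (monicVal_ne_zero d c)
      (lowVal_ne_zero he0)
      (by rw [monicVal_add_lowVal]; exact monicVal_ne_zero d _) (2 * s) s h2s1 hs1
    rw [monicVal_add_lowVal] at h
    exact h
  have shift : ∀ (e : Fin d → F) (m : ℕ),
      (∑ c : Fin d → F, ((monicVal F d (c + e)) ^ m)⁻¹)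
        = ∑ c : Fin d → F, ((monicVal F d c) ^ m)⁻¹ := by
    intro e m
    apply Finset.sum_nbij' (i := fun c => c + e) (j := fun c => c + e)
    · intro a _; exact Finset.mem_univ _
    · intro a _; exact Finset.mem_univ _
    · intro a _
      rw [add_assoc, hself, add_zero]
    · intro a _
      rw [add_assoc, hself, add_zero]
    · intro a _; rfl
  have cross0 : (∑ c : Fin d → F, ∑ c' ∈ Finset.univ.erase c,
      ((monicVal F d c) ^ (2 * s))⁻¹ * ((monicVal F d c') ^ s)⁻¹) = 0 := by
    rw [Finset.sum_congr rfl fun c _ =>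
      (reindex1 c).trans (Finset.sum_congr rfl (mainrw c))]
    rw [Finset.sum_congr rfl fun c _ => Finset.sum_add_distrib, Finset.sum_add_distrib]
    have part1 : (∑ c : Fin d → F, ∑ e ∈ Finset.univ.erase (0 : Fin d → F),
        ∑ k ∈ Finset.range (2 * s), (Nat.choose (s - 1 + k) k : LaurentSeries F)
          * (((lowVal F d e) ^ (s + k))⁻¹ * ((monicVal F d c) ^ (2 * s - k))⁻¹)) = 0 := by
      rw [Finset.sum_comm]
      rw [Finset.sum_congr rfl fun e _ => Finset.sum_comm]
      rw [Finset.sum_congr rfl fun e _ => Finset.sum_congr rfl fun k _ => by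
        rw [← Finset.mul_sum, ← Finset.mul_sum]]
      rw [Finset.sum_comm]
      apply Finset.sum_eq_zero
      intro k hk
      rw [← Finset.mul_sum, ← Finset.sum_mul]
      by_cases hdvd : (Fintype.card F - 1) ∣ (s + k)
      · have hz : (Nat.choose (s - 1 + k) k : LaurentSeries F) = 0 := by
          rw [(CharP.cast_eq_zero_iff (LaurentSeries F) 2 _)]
          exact chi_one (Fintype.card F) b k h16 h3q hb4 hb'
            (by simpa [hsdef] using Finset.mem_range.mp hk) (by rwa [hsdef] at hdvd)
        rw [hz, zero_mul]
      · have hz := sum_inv_pow_lowVal_eq_zero F (d := d) (s + k) (by omega) hdvd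
        rw [hz, zero_mul, mul_zero]
    have part2 : (∑ c : Fin d → F, ∑ e ∈ Finset.univ.erase (0 : Fin d → F),
        ∑ k ∈ Finset.range s, (Nat.choose (2 * s - 1 + k) k : LaurentSeries F)
          * (((lowVal F d e) ^ (2 * s + k))⁻¹ * ((monicVal F d (c + e)) ^ (s - k))⁻¹)) = 0 := by
      rw [Finset.sum_comm]
      rw [Finset.sum_congr rfl fun e _ => Finset.sum_comm]
      rw [Finset.sum_congr rfl fun e he => Finset.sum_congr rfl fun k _ => by
        rw [← Finset.mul_sum, ← Finset.mul_sum, shift e (s - k)]]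
      rw [Finset.sum_comm]
      apply Finset.sum_eq_zero
      intro k hk
      rw [← Finset.mul_sum, ← Finset.sum_mul]
      by_cases hdvd : (Fintype.card F - 1) ∣ (2 * s + k)
      · have hz : (Nat.choose (2 * s - 1 + k) k : LaurentSeries F) = 0 := by
          rw [(CharP.cast_eq_zero_iff (LaurentSeries F) 2 _)]
          exact chi_two (Fintype.card F) b k h16 h3q hb4 hb'
            (by simpa [hsdef] using Finset.mem_range.mp hk) (by rwa [hsdef] at hdvd)
        rw [hz, zero_mul]
      · have hz := sum_inv_pow_lowVal_eq_zero F (d := d) (2 * s + k) (by omega) hdvd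
        rw [hz, zero_mul, mul_zero]
    rw [part1, part2, add_zero]
  rw [cross0, add_zero]
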